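/- arXiv:1310.3787 — 2 statements merged into one kernel-verified Lean document; each statement's English description precedes it below -/
import Mathlib

section
/- Under the assumptions of the convex AG convergence theorem ($\Psi$ convex with $L_\Psi$-Lipschitz gradient, minimizer $x^*$, stepsizes with $\alpha_k\lambda_k \le \beta_k < 1/L_\Psi$ and $\alpha_k/(\lambda_k\Gamma_k)$ nonincreasing), one also has the gradient bound $\min_{k=1,\ldots,N}\|\nabla\Psi(x_k^{md})\|^2 \le \frac{\|x_0 - x^*\|^2}{\lambda_1\sum_{k=1}^N \Gamma_k^{-1}\beta_k(1 - L_\Psi\beta_k)}$ for all $N \ge 1$. -/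
open Finset InnerProductSpace Topology Filter

section Aux

variable {F : Type*} [NormedAddCommGroup F] [InnerProductSpace ℝ F] [CompleteSpace F]

/-- derivative of t ↦ f (c + t • v) -/
lemma line_hasDerivAt (f : F → ℝ) (g : F → F) (hg : ∀ p, HasGradientAt f (g p) p)
    (c v : F) (t : ℝ) :
    HasDerivAt (fun s : ℝ => f (c + s • v)) (⟪g (c + t • v), v⟫_ℝ) t := by
  have hline : HasDerivAt (fun s : ℝ => c + s • v) v t := by
    simpa using ((hasDerivAt_id t).smul_const v).const_add c
  have := (hg (c + t • v)).hasFDerivAt.comp_hasDerivAt t hline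
  simpa [toDual_apply_apply, Function.comp_def] using this

/-- gradient inequality for convex functions -/
lemma convex_grad_ineq (f : F → ℝ) (g : F → F) (hg : ∀ p, HasGradientAt f (g p) p)
    (hconv : ConvexOn ℝ Set.univ f) (z u : F) :
    f z + ⟪g z, u - z⟫_ℝ ≤ f u := by
  set v := u - z with hv
  have hd : HasDerivAt (fun s : ℝ => f (z + s • v)) (⟪g z, v⟫_ℝ) 0 := by
    simpa using line_hasDerivAt f g hg z v 0
  have hslope : Filter.Tendsto (slope (fun s : ℝ => f (z + s • v)) 0) (𝓝[>] 0)
      (𝓝 (⟪g z, v⟫_ℝ)) := by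
    have := hasDerivAt_iff_tendsto_slope.1 hd
    exact this.mono_left (nhdsWithin_mono 0 (fun t ht => ne_of_gt ht))
  have hbound : ∀ᶠ t in 𝓝[>] (0:ℝ), slope (fun s : ℝ => f (z + s • v)) 0 t ≤ f u - f z := by
    filter_upwards [Ioc_mem_nhdsGT_of_mem (Set.mem_Ico.2 ⟨le_refl (0:ℝ), one_pos⟩)] with t ht
    obtain ⟨ht0, ht1⟩ := ht
    have hcomb : f (z + t • v) ≤ (1 - t) * f z + t * f u := by
      have h2 : z + t • v = (1 - t) • z + t • u := by rw [hv]; module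
      rw [h2]
      simpa [smul_eq_mul] using hconv.2 (Set.mem_univ z) (Set.mem_univ u)
        (by linarith : (0:ℝ) ≤ 1 - t) (le_of_lt ht0) (by ring : (1 - t) + t = 1)
    rw [slope_def_field]
    simp only [sub_zero, zero_smul, add_zero] at *
    rw [div_le_iff₀ ht0]
    nlinarith
  have : ⟪g z, v⟫_ℝ ≤ f u - f z := le_of_tendsto hslope hbound
  linarith

/-- descent lemma -/
lemma descent_lemma (f : F → ℝ) (g : F → F) (L : ℝ) (hg : ∀ p, HasGradientAt f (g p) p)
    (hL : ∀ x y, ‖g x - g y‖ ≤ L * ‖x - y‖) (c y : F) :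
    f y ≤ f c + ⟪g c, y - c⟫_ℝ + L / 2 * ‖y - c‖ ^ 2 := by
  set v := y - c with hv
  set ψ : ℝ → ℝ := fun t => f (c + t • v) - t * ⟪g c, v⟫_ℝ - L * ‖v‖ ^ 2 / 2 * t ^ 2 with hψ
  have hψ' : ∀ t : ℝ, HasDerivAt ψ (⟪g (c + t • v), v⟫_ℝ - ⟪g c, v⟫_ℝ - L * ‖v‖ ^ 2 * t) t := by
    intro t
    have h1 := line_hasDerivAt f g hg c v t
    have h2 : HasDerivAt (fun t : ℝ => t * ⟪g c, v⟫_ℝ) (⟪g c, v⟫_ℝ) t := by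
      simpa using (hasDerivAt_id t).mul_const (⟪g c, v⟫_ℝ)
    have h3 : HasDerivAt (fun t : ℝ => L * ‖v‖ ^ 2 / 2 * t ^ 2) (L * ‖v‖ ^ 2 * t) t := by
      have h := (hasDerivAt_pow 2 t).const_mul (L * ‖v‖ ^ 2 / 2)
      exact h.congr_deriv (by norm_num; ring)
    exact (h1.sub h2).sub h3
  have hanti : AntitoneOn ψ (Set.Ici (0:ℝ)) := by
    apply antitoneOn_of_hasDerivWithinAt_nonpos (convex_Ici 0)
      (fun t _ => (hψ' t).continuousAt.continuousWithinAt)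
      (fun t ht => ((hψ' t).hasDerivWithinAt))
    intro t ht
    rw [interior_Ici] at ht
    have ht0 : 0 < t := ht
    have hip : ⟪g (c + t • v) - g c, v⟫_ℝ ≤ L * ‖v‖ ^ 2 * t := by
      calc ⟪g (c + t • v) - g c, v⟫_ℝ ≤ ‖g (c + t • v) - g c‖ * ‖v‖ :=
            real_inner_le_norm _ _
        _ ≤ (L * ‖(c + t • v) - c‖) * ‖v‖ := by
            apply mul_le_mul_of_nonneg_right (hL _ _) (norm_nonneg _)
        _ = L * ‖v‖ ^ 2 * t := by
            simp [norm_smul, abs_of_pos ht0]; ring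
    rw [inner_sub_left] at hip
    linarith
  have h01 : ψ 1 ≤ ψ 0 := hanti (Set.self_mem_Ici) (by norm_num) zero_le_one
  simp only [hψ, one_smul, zero_smul, add_zero, one_pow, zero_pow, one_mul, zero_mul] at h01
  have : c + v = y := by rw [hv]; abel
  rw [this] at h01
  simp at h01
  linarith


lemma ag_seq_bound (α lam Γ δ Δ E : ℕ → ℝ)
    (hα1 : α 1 = 1)
    (hΓ1 : Γ 1 = 1) (hΓ : ∀ k ≥ 2, Γ k = (1 - α k) * Γ (k - 1))
    (hΓpos : ∀ k ≥ 1, 0 < Γ k)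
    (hlam : ∀ k ≥ 1, 0 < lam k)
    (hmono : ∀ k ≥ 1, α (k + 1) / (lam (k + 1) * Γ (k + 1)) ≤ α k / (lam k * Γ k))
    (hαpos : ∀ k ≥ 1, 0 < α k)
    (hδ : ∀ k ≥ 1, 0 ≤ δ k)
    (hΔ : ∀ k, 0 ≤ Δ k)
    (hkey : ∀ k ≥ 1, δ k ≤ (1 - α k) * δ (k - 1) + α k / (2 * lam k) * (Δ (k - 1) - Δ k) - E k) :
    ∀ N ≥ 1, ∑ k ∈ Icc 1 N, (Γ k)⁻¹ * E k ≤ Δ 0 / (2 * lam 1) := by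
  have inv : ∀ N ≥ 1, δ N / Γ N + α N / (lam N * Γ N) / 2 * Δ N
      + ∑ k ∈ Icc 1 N, (Γ k)⁻¹ * E k ≤ Δ 0 / (2 * lam 1) := by
    intro N hN
    induction N, hN using Nat.le_induction with
    | base =>
      have hk := hkey 1 le_rfl
      have hl := hlam 1 le_rfl
      rw [Icc_self, sum_singleton, hΓ1]
      simp only [hα1, hΓ1, show (1:ℕ) - 1 = 0 from rfl] at hk
      have e1 : (1:ℝ) / (2 * lam 1) * (Δ 0 - Δ 1)
          = Δ 0 / (2 * lam 1) - 1 / (lam 1 * 1) / 2 * Δ 1 := by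
        field_simp
      have e2 : δ 1 / 1 = δ 1 := by ring
      have e3 : (1:ℝ)⁻¹ * E 1 = E 1 := by ring
      have e4 : α 1 / (lam 1 * 1) / 2 * Δ 1 = 1 / (lam 1 * 1) / 2 * Δ 1 := by rw [hα1]
      rw [e2, e3, e4]
      linarith [hk, e1]
    | succ N hN ih =>
      have hk := hkey (N + 1) (by omega)
      have hΓr : Γ (N + 1) = (1 - α (N + 1)) * Γ N := by
        have := hΓ (N + 1) (by omega); simpa using this
      have hΓp1 := hΓpos (N + 1) (by omega)
      have hΓpN := hΓpos N hN
      have hlp1 := hlam (N + 1) (by omega)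
      have hlpN := hlam N hN
      have hαp1 := hαpos (N + 1) (by omega)
      have hm := hmono N hN
      simp only [Nat.add_sub_cancel] at hk
      -- divide key by Γ (N+1)
      have key' : δ (N + 1) / Γ (N + 1) ≤ δ N / Γ N
          + α (N + 1) / (lam (N + 1) * Γ (N + 1)) / 2 * (Δ N - Δ (N + 1))
          - (Γ (N + 1))⁻¹ * E (N + 1) := by
        have h1 : δ (N + 1) / Γ (N + 1) ≤ ((1 - α (N + 1)) * δ N
            + α (N + 1) / (2 * lam (N + 1)) * (Δ N - Δ (N + 1)) - E (N + 1)) / Γ (N + 1) := by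
          gcongr
        refine h1.trans (le_of_eq ?_)
        rw [hΓr]
        have h1α : (1:ℝ) - α (N + 1) ≠ 0 := by
          have : (1 - α (N + 1)) * Γ N > 0 := by rw [← hΓr]; exact hΓp1
          intro h; rw [h] at this; simp at this
        field_simp
      have hsum : ∑ k ∈ Icc 1 (N + 1), (Γ k)⁻¹ * E k
          = (∑ k ∈ Icc 1 N, (Γ k)⁻¹ * E k) + (Γ (N + 1))⁻¹ * E (N + 1) := by
        rw [Finset.sum_Icc_succ_top (by omega)]
      have hmul : α (N + 1) / (lam (N + 1) * Γ (N + 1)) / 2 * Δ N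
          ≤ α N / (lam N * Γ N) / 2 * Δ N :=
        mul_le_mul_of_nonneg_right (by linarith) (hΔ N)
      have e5 : α (N + 1) / (lam (N + 1) * Γ (N + 1)) / 2 * (Δ N - Δ (N + 1))
          = α (N + 1) / (lam (N + 1) * Γ (N + 1)) / 2 * Δ N
            - α (N + 1) / (lam (N + 1) * Γ (N + 1)) / 2 * Δ (N + 1) := by ring
      rw [hsum]
      linarith
  intro N hN
  have h := inv N hN
  have h1 : 0 ≤ δ N / Γ N := div_nonneg (hδ N hN) (le_of_lt (hΓpos N hN))
  have h2 : 0 ≤ α N / (lam N * Γ N) / 2 * Δ N := by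
    apply mul_nonneg (div_nonneg (div_nonneg (le_of_lt (hαpos N hN))
      (le_of_lt (mul_pos (hlam N hN) (hΓpos N hN)))) (by norm_num)) (hΔ N)
  linarith

end Aux

set_option maxHeartbeats 1000000 in
theorem ag_convex_gradient_bound {n : ℕ}
    (Ψ : EuclideanSpace ℝ (Fin n) → ℝ) (g : EuclideanSpace ℝ (Fin n) → EuclideanSpace ℝ (Fin n))
    (LΨ : ℝ)
    (hg : ∀ x, HasGradientAt Ψ (g x) x)
    (hL : ∀ x y, ‖g x - g y‖ ≤ LΨ * ‖x - y‖)
    (hconv : ConvexOn ℝ Set.univ Ψ)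
    (xstar : EuclideanSpace ℝ (Fin n)) (hmin : ∀ z, Ψ xstar ≤ Ψ z)
    (α β lam Γ : ℕ → ℝ)
    (hα1 : α 1 = 1) (hα : ∀ k ≥ 2, α k ∈ Set.Ioo (0:ℝ) 1)
    (hΓ1 : Γ 1 = 1) (hΓ : ∀ k ≥ 2, Γ k = (1 - α k) * Γ (k - 1))
    (hstep : ∀ k ≥ 1, α k * lam k ≤ β k ∧ β k < 1 / LΨ)
    (hlam : ∀ k ≥ 1, 0 < lam k)
    (hmono : ∀ k ≥ 1, α (k + 1) / (lam (k + 1) * Γ (k + 1)) ≤ α k / (lam k * Γ k))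
    (x xag xmd : ℕ → EuclideanSpace ℝ (Fin n))
    (hag0 : xag 0 = x 0)
    (hmd : ∀ k ≥ 1, xmd k = (1 - α k) • xag (k - 1) + α k • x (k - 1))
    (hx : ∀ k ≥ 1, x k = x (k - 1) - lam k • g (xmd k))
    (hxag : ∀ k ≥ 1, xag k = xmd k - β k • g (xmd k)) :
    ∀ N ≥ 1, ∃ k ∈ Finset.Icc 1 N,
      ‖g (xmd k)‖ ^ 2 ≤ ‖x 0 - xstar‖ ^ 2 /
        (lam 1 * ∑ j ∈ Finset.Icc 1 N, (Γ j)⁻¹ * β j * (1 - LΨ * β j)) := by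
  -- basic positivity facts
  have hαpos : ∀ k ≥ 1, 0 < α k := by
    intro k hk
    rcases Nat.lt_or_ge k 2 with h | h
    · have : k = 1 := by omega
      rw [this, hα1]; norm_num
    · exact (hα k h).1
  have hαle : ∀ k ≥ 1, α k ≤ 1 := by
    intro k hk
    rcases Nat.lt_or_ge k 2 with h | h
    · have : k = 1 := by omega
      rw [this, hα1]
    · exact le_of_lt (hα k h).2
  have hΓpos : ∀ k ≥ 1, 0 < Γ k := by
    intro k hk
    induction k, hk using Nat.le_induction with
    | base => rw [hΓ1]; norm_num
    | succ N hN ih =>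
      have h2 : (2:ℕ) ≤ N + 1 := by omega
      have := hΓ (N + 1) h2
      simp only [Nat.add_sub_cancel] at this
      rw [this]
      exact mul_pos (by linarith [(hα (N + 1) h2).2]) ih
  have hβpos : ∀ k ≥ 1, 0 < β k := fun k hk =>
    lt_of_lt_of_le (mul_pos (hαpos k hk) (hlam k hk)) (hstep k hk).1
  have hLpos : 0 < LΨ := by
    have h1 := (hstep 1 le_rfl).2
    have h2 := hβpos 1 le_rfl
    have : 0 < 1 / LΨ := lt_trans h2 h1
    exact (one_div_pos).1 this
  have hLβ : ∀ k ≥ 1, LΨ * β k < 1 := by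
    intro k hk
    have := (hstep k hk).2
    rw [lt_div_iff₀ hLpos] at this
    linarith
  -- the key per-step inequality
  have hkey : ∀ k ≥ 1, Ψ (xag k) - Ψ xstar ≤
      (1 - α k) * (Ψ (xag (k - 1)) - Ψ xstar)
      + α k / (2 * lam k) * (‖x (k - 1) - xstar‖ ^ 2 - ‖x k - xstar‖ ^ 2)
      - β k / 2 * (1 - LΨ * β k) * ‖g (xmd k)‖ ^ 2 := by
    intro k hk
    set G := g (xmd k) with hG
    set z := xmd k with hz
    set h2 := ‖G‖ ^ 2 with hh2
    have hαk := hαpos k hk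
    have hαk1 := hαle k hk
    have hlk := hlam k hk
    have hβk := hβpos k hk
    -- smoothness (descent)
    have hsm := descent_lemma Ψ g LΨ hg hL z (xag k)
    have hd : xag k - z = (-(β k)) • G := by rw [hxag k hk, hz, hG]; module
    have hip1 : ⟪G, xag k - z⟫_ℝ = -(β k) * h2 := by
      rw [hd, real_inner_smul_right, real_inner_self_eq_norm_sq, hh2]
    have hnm1 : ‖xag k - z‖ ^ 2 = β k ^ 2 * h2 := by
      rw [hd, norm_smul, mul_pow, hh2]
      congr 1
      rw [Real.norm_eq_abs, sq_abs, neg_pow]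
      ring
    rw [hip1, hnm1] at hsm
    -- convexity at xag (k-1) and xstar
    have b1 := convex_grad_ineq Ψ g hg hconv z (xag (k - 1))
    have b2 := convex_grad_ineq Ψ g hg hconv z xstar
    -- vector identity
    have vid : (1 - α k) • (xag (k - 1) - z) + α k • (xstar - z)
        = α k • (xstar - x (k - 1)) := by
      rw [hz, hmd k hk]; module
    have hip2 : (1 - α k) * ⟪G, xag (k - 1) - z⟫_ℝ + α k * ⟪G, xstar - z⟫_ℝ
        = α k * ⟪G, xstar - x (k - 1)⟫_ℝ := by
      rw [← real_inner_smul_right, ← real_inner_smul_right, ← real_inner_smul_right,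
        ← inner_add_right, vid]
    -- combine convexity
    have hz' : Ψ z ≤ (1 - α k) * Ψ (xag (k - 1)) + α k * Ψ xstar
        + α k * ⟪G, x (k - 1) - xstar⟫_ℝ := by
      have c1 : (1 - α k) * (Ψ z + ⟪G, xag (k - 1) - z⟫_ℝ) ≤ (1 - α k) * Ψ (xag (k - 1)) :=
        mul_le_mul_of_nonneg_left b1 (by linarith)
      have c2 : α k * (Ψ z + ⟪G, xstar - z⟫_ℝ) ≤ α k * Ψ xstar :=
        mul_le_mul_of_nonneg_left b2 (le_of_lt hαk)
      have e7 : ⟪G, x (k - 1) - xstar⟫_ℝ = -⟪G, xstar - x (k - 1)⟫_ℝ := by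
        rw [← inner_neg_right]; congr 1; abel
      rw [e7]
      nlinarith [hip2]
    -- the step identity
    have hI : ⟪G, x (k - 1) - xstar⟫_ℝ
        = (‖x (k - 1) - xstar‖ ^ 2 - ‖x k - xstar‖ ^ 2) / (2 * lam k) + lam k / 2 * h2 := by
      have hxk : x k - xstar = (x (k - 1) - xstar) - lam k • G := by
        rw [hx k hk]; module
      have hexp : ‖x k - xstar‖ ^ 2 = ‖x (k - 1) - xstar‖ ^ 2
          - 2 * (lam k * ⟪G, x (k - 1) - xstar⟫_ℝ) + lam k ^ 2 * h2 := by
        rw [hxk, norm_sub_sq_real, real_inner_smul_right, norm_smul, mul_pow,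
          real_inner_comm, hh2]
        congr 2
        rw [Real.norm_eq_abs, sq_abs]
      rw [hexp]
      field_simp
      ring
    -- combine everything
    have hprod : α k * lam k / 2 * h2 ≤ β k / 2 * h2 :=
      mul_le_mul_of_nonneg_right (by linarith [(hstep k hk).1]) (by positivity)
    have eα : α k * ((‖x (k - 1) - xstar‖ ^ 2 - ‖x k - xstar‖ ^ 2) / (2 * lam k)
          + lam k / 2 * h2)
        = α k / (2 * lam k) * (‖x (k - 1) - xstar‖ ^ 2 - ‖x k - xstar‖ ^ 2)
          + α k * lam k / 2 * h2 := by ring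
    rw [hI] at hz'
    have hz'' : Ψ z ≤ (1 - α k) * Ψ (xag (k - 1)) + α k * Ψ xstar
        + α k / (2 * lam k) * (‖x (k - 1) - xstar‖ ^ 2 - ‖x k - xstar‖ ^ 2)
        + α k * lam k / 2 * h2 := by linarith [eα]
    linarith [hsm, hz'', hprod]
  -- apply the sequence lemma
  intro N hN
  have hsum := ag_seq_bound α lam Γ
    (fun k => Ψ (xag k) - Ψ xstar) (fun k => ‖x k - xstar‖ ^ 2)
    (fun k => β k / 2 * (1 - LΨ * β k) * ‖g (xmd k)‖ ^ 2)
    hα1 hΓ1 hΓ hΓpos hlam hmono hαpos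
    (fun k _ => by simp [hmin (xag k)])
    (fun k => by positivity)
    hkey N hN
  obtain ⟨m, hm, hmle⟩ := Finset.exists_min_image (Icc 1 N)
    (fun k => ‖g (xmd k)‖ ^ 2) ⟨1, by simp [hN]⟩
  refine ⟨m, hm, ?_⟩
  set T := ∑ j ∈ Finset.Icc 1 N, (Γ j)⁻¹ * β j * (1 - LΨ * β j) with hT
  have hTpos : 0 < T := by
    apply sum_pos
    · intro j hj
      rw [mem_Icc] at hj
      have hj1 : 1 ≤ j := hj.1
      have p1 := hLβ j hj1
      have p2 := hβpos j hj1
      have p3 := hΓpos j hj1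
      have : (0:ℝ) < 1 - LΨ * β j := by linarith
      exact mul_pos (mul_pos (inv_pos.2 p3) p2) this
    · exact ⟨1, by simp [hN]⟩
  have hl1 := hlam 1 le_rfl
  have hlow : 1 / 2 * T * ‖g (xmd m)‖ ^ 2
      ≤ ∑ k ∈ Icc 1 N, (Γ k)⁻¹ * (β k / 2 * (1 - LΨ * β k) * ‖g (xmd k)‖ ^ 2) := by
    rw [hT, mul_sum, sum_mul]
    apply sum_le_sum
    intro j hj
    rw [mem_Icc] at hj
    have hj1 : 1 ≤ j := hj.1
    have h1 := hLβ j hj1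
    have h2 := hβpos j hj1
    have h3 := hΓpos j hj1
    have h4 := hmle m hm  -- dummy
    have h5 := hmle j (mem_Icc.2 hj)
    have hc : (0:ℝ) ≤ (Γ j)⁻¹ * β j * (1 - LΨ * β j) :=
      le_of_lt (mul_pos (mul_pos (inv_pos.2 h3) h2) (by linarith))
    calc 1 / 2 * ((Γ j)⁻¹ * β j * (1 - LΨ * β j)) * ‖g (xmd m)‖ ^ 2
        ≤ 1 / 2 * ((Γ j)⁻¹ * β j * (1 - LΨ * β j)) * ‖g (xmd j)‖ ^ 2 := by
          apply mul_le_mul_of_nonneg_left h5 (by linarith)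
      _ = (Γ j)⁻¹ * (β j / 2 * (1 - LΨ * β j) * ‖g (xmd j)‖ ^ 2) := by ring
  have hchain : 1 / 2 * T * ‖g (xmd m)‖ ^ 2 ≤ ‖x 0 - xstar‖ ^ 2 / (2 * lam 1) :=
    le_trans hlow hsum
  rw [le_div_iff₀ (mul_pos hl1 hTpos)]
  have e8 : ‖g (xmd m)‖ ^ 2 * (lam 1 * T) = 2 * lam 1 * (1 / 2 * T * ‖g (xmd m)‖ ^ 2) := by
    ring
  have e9 : 2 * lam 1 * (‖x 0 - xstar‖ ^ 2 / (2 * lam 1)) = ‖x 0 - xstar‖ ^ 2 := by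
    field_simp
  nlinarith [hchain, mul_le_mul_of_nonneg_left hchain (by linarith : (0:ℝ) ≤ 2 * lam 1)]
end

section
/- Let $\Psi: \mathbb{R}^n \to \mathbb{R}$ be convex, differentiable with $L_\Psi$-Lipschitz gradient, with minimizer $x^*$. Running the AG iteration with $\alpha_k = 2/(k+1)$, $\beta_k = 1/(2L_\Psi)$, and $\lambda_k = k\beta_k/2$ yields, for any $N \ge 1$: $\Psi(x_N^{ag}) - \Psi(x^*) \le \frac{4L_\Psi\|x_0 - x^*\|^2}{N(N+1)}$ and $\min_{k=1,\ldots,N}\|\nabla\Psi(x_k^{md})\|^2 \le \frac{96 L_\Psi^2 \|x_0 - x^*\|^2}{N^2(N+1)}$. -/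
open Finset

open scoped RealInnerProductSpace

private lemma ag_line_deriv {n : ℕ} {Ψ : EuclideanSpace ℝ (Fin n) → ℝ}
    {g : EuclideanSpace ℝ (Fin n) → EuclideanSpace ℝ (Fin n)}
    (hg : ∀ x, HasGradientAt Ψ (g x) x) (a v : EuclideanSpace ℝ (Fin n)) (t : ℝ) :
    HasDerivAt (fun s : ℝ => Ψ (a + s • v)) ⟪g (a + t • v), v⟫ t := by
  have hc : HasDerivAt (fun s : ℝ => a + s • v) v t := by
    simpa using ((hasDerivAt_id t).smul_const v).const_add a
  have hΨ : HasFDerivAt Ψ (InnerProductSpace.toDual ℝ _ (g (a + t • v))) (a + t • v) :=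
    (hg _).hasFDerivAt
  have := hΨ.comp_hasDerivAt t hc
  simpa [Function.comp, Function.comp_def, InnerProductSpace.toDual_apply_apply] using this

private lemma ag_convex_lb {n : ℕ} {Ψ : EuclideanSpace ℝ (Fin n) → ℝ}
    {g : EuclideanSpace ℝ (Fin n) → EuclideanSpace ℝ (Fin n)}
    (hg : ∀ x, HasGradientAt Ψ (g x) x) (hconv : ConvexOn ℝ Set.univ Ψ)
    (a b : EuclideanSpace ℝ (Fin n)) : Ψ a + ⟪g a, b - a⟫ ≤ Ψ b := by
  set φ : ℝ → ℝ := fun t => Ψ (a + t • (b - a)) with hφdef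
  have hφ : ConvexOn ℝ Set.univ φ := by
    have := hconv.comp_affineMap (AffineMap.lineMap a b : ℝ →ᵃ[ℝ] _)
    have heq : (Ψ ∘ (AffineMap.lineMap a b : ℝ →ᵃ[ℝ] _)) = φ := by
      funext t
      show Ψ _ = Ψ _
      rw [AffineMap.lineMap_apply_module]
      congr 1
      module
    rw [heq] at this
    simpa using this
  have hd : HasDerivAt φ ⟪g a, b - a⟫ 0 := by
    have := ag_line_deriv hg a (b - a) 0
    simpa using this
  have hs := hφ.le_slope_of_hasDerivAt (Set.mem_univ (0:ℝ)) (Set.mem_univ (1:ℝ)) one_pos hd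
  have h0 : φ 0 = Ψ a := by simp [φ]
  have h1 : φ 1 = Ψ b := by simp [φ]
  rw [slope_def_field, h0, h1] at hs
  have : (Ψ b - Ψ a) / (1 - 0) = Ψ b - Ψ a := by norm_num
  rw [this] at hs
  linarith

private lemma ag_descent {n : ℕ} {Ψ : EuclideanSpace ℝ (Fin n) → ℝ}
    {g : EuclideanSpace ℝ (Fin n) → EuclideanSpace ℝ (Fin n)} {LΨ : ℝ} (hLΨ : 0 < LΨ)
    (hg : ∀ x, HasGradientAt Ψ (g x) x)
    (hL : ∀ x y, ‖g x - g y‖ ≤ LΨ * ‖x - y‖)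
    (a b : EuclideanSpace ℝ (Fin n)) :
    Ψ b ≤ Ψ a + ⟪g a, b - a⟫ + LΨ / 2 * ‖b - a‖ ^ 2 := by
  set v := b - a with hv
  set φ : ℝ → ℝ := fun t => Ψ (a + t • v) with hφdef
  set φ' : ℝ → ℝ := fun t => ⟪g (a + t • v), v⟫ with hφ'def
  have hderiv : ∀ t ∈ Set.uIcc (0:ℝ) 1, HasDerivAt φ (φ' t) t := fun t _ =>
    ag_line_deriv hg a v t
  have hgc : Continuous g := by
    have : LipschitzWith (Real.toNNReal LΨ) g := by
      apply LipschitzWith.of_dist_le_mul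
      intro x y
      rw [dist_eq_norm, dist_eq_norm, Real.coe_toNNReal _ hLΨ.le]
      exact hL x y
    exact this.continuous
  have hcont : Continuous φ' := by
    apply Continuous.inner
    · exact hgc.comp (continuous_const.add (continuous_id.smul continuous_const))
    · exact continuous_const
  have hint : IntervalIntegrable φ' MeasureTheory.volume 0 1 := hcont.intervalIntegrable _ _
  have heq : ∫ t in (0:ℝ)..1, φ' t = φ 1 - φ 0 :=
    intervalIntegral.integral_eq_sub_of_hasDerivAt hderiv hint
  have hmono : ∫ t in (0:ℝ)..1, φ' t ≤ ∫ t in (0:ℝ)..1, (⟪g a, v⟫ + (LΨ * ‖v‖ ^ 2) * t) := by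
    apply intervalIntegral.integral_mono_on zero_le_one hint
    · exact ((continuous_const.add ((continuous_const.mul continuous_id)))).intervalIntegrable _ _
    · intro t ht
      have h1 : φ' t - ⟪g a, v⟫ = ⟪g (a + t • v) - g a, v⟫ := by
        simp [φ', inner_sub_left]
      have h2 : ⟪g (a + t • v) - g a, v⟫ ≤ ‖g (a + t • v) - g a‖ * ‖v‖ :=
        real_inner_le_norm _ _
      have h3 : ‖g (a + t • v) - g a‖ ≤ LΨ * (t * ‖v‖) := by
        have := hL (a + t • v) a
        simpa [norm_smul, abs_of_nonneg ht.1] using this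
      have h4 : ‖g (a + t • v) - g a‖ * ‖v‖ ≤ (LΨ * (t * ‖v‖)) * ‖v‖ :=
        mul_le_mul_of_nonneg_right h3 (norm_nonneg _)
      have : φ' t - ⟪g a, v⟫ ≤ (LΨ * ‖v‖ ^ 2) * t := by
        rw [h1]
        calc ⟪g (a + t • v) - g a, v⟫ ≤ (LΨ * (t * ‖v‖)) * ‖v‖ := le_trans h2 h4
        _ = (LΨ * ‖v‖ ^ 2) * t := by ring
      linarith
  have hval : ∫ t in (0:ℝ)..1, (⟪g a, v⟫ + (LΨ * ‖v‖ ^ 2) * t)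
      = ⟪g a, v⟫ + LΨ / 2 * ‖v‖ ^ 2 := by
    have hc2 : Continuous (fun t : ℝ => LΨ * ‖v‖ ^ 2 * t) := by fun_prop
    rw [intervalIntegral.integral_add (intervalIntegrable_const)
      (hc2.intervalIntegrable _ _),
      intervalIntegral.integral_const_mul, integral_id, intervalIntegral.integral_const]
    norm_num
    ring
  have h0 : φ 0 = Ψ a := by simp [φ]
  have h1 : φ 1 = Ψ b := by simp [φ, v]
  rw [heq, h0, h1, hval] at hmono
  linarith

private lemma ag_sum_icc (N : ℕ) : ∑ k ∈ Finset.Icc 1 N, (k:ℝ) * ((k:ℝ) + 1)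
    = (N:ℝ) * ((N:ℝ) + 1) * ((N:ℝ) + 2) / 3 := by
  induction N with
  | zero => simp
  | succ m ihm =>
    rw [Finset.sum_Icc_succ_top (by omega : 1 ≤ m + 1), ihm]
    push_cast
    ring

set_option maxHeartbeats 1000000 in
theorem ag_convex_rate {n : ℕ}
    (Ψ : EuclideanSpace ℝ (Fin n) → ℝ) (g : EuclideanSpace ℝ (Fin n) → EuclideanSpace ℝ (Fin n))
    (LΨ : ℝ) (hLΨ : 0 < LΨ)
    (hg : ∀ x, HasGradientAt Ψ (g x) x)
    (hL : ∀ x y, ‖g x - g y‖ ≤ LΨ * ‖x - y‖)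
    (hconv : ConvexOn ℝ Set.univ Ψ)
    (xstar : EuclideanSpace ℝ (Fin n)) (hmin : ∀ z, Ψ xstar ≤ Ψ z)
    (α β lam : ℕ → ℝ)
    (hα : ∀ k ≥ 1, α k = 2 / ((k : ℝ) + 1))
    (hβ : ∀ k ≥ 1, β k = 1 / (2 * LΨ))
    (hlam : ∀ k ≥ 1, lam k = (k : ℝ) * β k / 2)
    (x xag xmd : ℕ → EuclideanSpace ℝ (Fin n))
    (hag0 : xag 0 = x 0)
    (hmd : ∀ k ≥ 1, xmd k = (1 - α k) • xag (k - 1) + α k • x (k - 1))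
    (hx : ∀ k ≥ 1, x k = x (k - 1) - lam k • g (xmd k))
    (hxag : ∀ k ≥ 1, xag k = xmd k - β k • g (xmd k)) :
    ∀ N : ℕ, 1 ≤ N →
      (Ψ (xag N) - Ψ xstar ≤ 4 * LΨ * ‖x 0 - xstar‖ ^ 2 / ((N : ℝ) * ((N : ℝ) + 1))) ∧
      ∃ k ∈ Finset.Icc 1 N,
        ‖g (xmd k)‖ ^ 2 ≤ 96 * LΨ ^ 2 * ‖x 0 - xstar‖ ^ 2 / ((N : ℝ) ^ 2 * ((N : ℝ) + 1)) := by
  have hLne : LΨ ≠ 0 := ne_of_gt hLΨ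
  -- per-step inequality
  have step : ∀ k : ℕ, 1 ≤ k →
      8 * (k:ℝ) * ((k:ℝ) + 1) * LΨ * (Ψ (xag k) - Ψ xstar) + 32 * LΨ ^ 2 * ‖x k - xstar‖ ^ 2
        + (k:ℝ) * ((k:ℝ) + 1) * ‖g (xmd k)‖ ^ 2
      ≤ 8 * (k:ℝ) * ((k:ℝ) - 1) * LΨ * (Ψ (xag (k - 1)) - Ψ xstar)
        + 32 * LΨ ^ 2 * ‖x (k - 1) - xstar‖ ^ 2 := by
    intro k hk
    have hc : (1:ℝ) ≤ (k:ℝ) := by exact_mod_cast hk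
    set c : ℝ := (k:ℝ) with hcdef
    set G : EuclideanSpace ℝ (Fin n) := g (xmd k) with hG
    set Q : ℝ := ‖G‖ ^ 2 with hQ
    have hQ0 : 0 ≤ Q := by positivity
    have hβ' : β k = 1 / (2 * LΨ) := hβ k hk
    have hlam' : lam k = c / (4 * LΨ) := by
      rw [hlam k hk, hβ', mul_one_div, div_div]
      congr 1
      ring
    have hα' : α k = 2 / (c + 1) := hα k hk
    have hc1 : (0:ℝ) < c + 1 := by linarith
    -- i1 : descent at xmd k
    have i1 : Ψ (xag k) ≤ Ψ (xmd k) - 3 / (8 * LΨ) * Q := by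
      have hd := ag_descent hLΨ hg hL (xmd k) (xag k)
      have hvv : xag k - xmd k = -(β k • G) := by rw [hxag k hk]; abel
      rw [hvv] at hd
      have e1 : ⟪G, -(β k • G)⟫ = -(β k * Q) := by
        rw [inner_neg_right, real_inner_smul_right, real_inner_self_eq_norm_sq]
      have e2 : ‖-(β k • G)‖ ^ 2 = β k ^ 2 * Q := by
        rw [norm_neg, norm_smul, mul_pow, Real.norm_eq_abs, sq_abs]
      rw [e1, e2] at hd
      have e3 : -(β k * Q) + LΨ / 2 * (β k ^ 2 * Q) = -(3 / (8 * LΨ) * Q) := by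
        rw [hβ']; field_simp; ring
      linarith
    -- i2 : convexity combination
    have i2 : Ψ (xmd k) ≤ (1 - α k) * Ψ (xag (k-1)) + α k * Ψ xstar
        + α k * ⟪G, x (k-1) - xstar⟫ := by
      have j1 : Ψ (xmd k) + ⟪G, xag (k-1) - xmd k⟫ ≤ Ψ (xag (k-1)) :=
        ag_convex_lb hg hconv (xmd k) (xag (k-1))
      have j2 : Ψ (xmd k) + ⟪G, xstar - xmd k⟫ ≤ Ψ xstar :=
        ag_convex_lb hg hconv (xmd k) xstar
      have hα0 : 0 ≤ α k := by rw [hα']; positivity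
      have hα1 : α k ≤ 1 := by
        rw [hα']; rw [div_le_one hc1]; linarith
      have hident : (1 - α k) * ⟪G, xag (k-1) - xmd k⟫ + α k * ⟪G, xstar - xmd k⟫
          = -(α k * ⟪G, x (k-1) - xstar⟫) := by
        rw [← real_inner_smul_right, ← real_inner_smul_right, ← inner_add_right,
          ← real_inner_smul_right, ← inner_neg_right]
        congr 1
        rw [hmd k hk]
        module
      have m1 := mul_le_mul_of_nonneg_left j1 (by linarith : (0:ℝ) ≤ 1 - α k)
      have m2 := mul_le_mul_of_nonneg_left j2 hα0
      nlinarith [m1, m2, hident]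
    -- i4 : distance recursion
    have i4 : ‖x k - xstar‖ ^ 2 = ‖x (k-1) - xstar‖ ^ 2
        - 2 * lam k * ⟪G, x (k-1) - xstar⟫ + lam k ^ 2 * Q := by
      have hxx : x k - xstar = (x (k-1) - xstar) - lam k • G := by
        rw [hx k hk]; abel
      rw [hxx, norm_sub_sq_real, real_inner_smul_right, norm_smul, mul_pow,
        Real.norm_eq_abs, sq_abs, real_inner_comm]
      ring
    -- combine
    set P : ℝ := ⟪G, x (k-1) - xstar⟫ with hP
    set d1 : ℝ := Ψ (xag k) - Ψ xstar with hd1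
    set d0 : ℝ := Ψ (xag (k-1)) - Ψ xstar with hd0
    have e1 : d1 ≤ (1 - α k) * d0 + α k * P - 3 / (8 * LΨ) * Q := by
      have := le_trans i1 (by linarith [i2] :
        Ψ (xmd k) - 3 / (8 * LΨ) * Q ≤ (1 - α k) * Ψ (xag (k-1)) + α k * Ψ xstar
          + α k * P - 3 / (8 * LΨ) * Q)
      have hexp : (1 - α k) * Ψ (xag (k-1)) + α k * Ψ xstar
          = (1 - α k) * d0 + Ψ xstar := by simp [d0]; ring
      rw [hexp] at this
      simp only [d1]
      linarith
    -- multiply e1 by 8*c*(c+1)*LΨ > 0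
    have hpos : (0:ℝ) < 8 * c * (c + 1) * LΨ := by positivity
    have e1' : 8 * c * (c + 1) * LΨ * d1 ≤ 8 * c * (c + 1) * LΨ *
        ((1 - α k) * d0 + α k * P - 3 / (8 * LΨ) * Q) :=
      mul_le_mul_of_nonneg_left e1 hpos.le
    have q1 : 8 * c * (c + 1) * LΨ * ((1 - α k) * d0 + α k * P - 3 / (8 * LΨ) * Q)
        = 8 * c * (c - 1) * LΨ * d0 + 16 * c * LΨ * P - 3 * c * (c + 1) * Q := by
      rw [hα']; field_simp; ring
    have q2 : 32 * LΨ ^ 2 * ‖x k - xstar‖ ^ 2 = 32 * LΨ ^ 2 * ‖x (k-1) - xstar‖ ^ 2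
        - 16 * c * LΨ * P + 2 * c ^ 2 * Q := by
      rw [i4, hlam']; field_simp; ring
    have hcQ : 0 ≤ c * Q := mul_nonneg (by linarith) hQ0
    rw [q1] at e1'
    linarith [e1', q2, hcQ]
  -- telescoped invariant
  have key : ∀ N : ℕ, 1 ≤ N →
      8 * (N:ℝ) * ((N:ℝ) + 1) * LΨ * (Ψ (xag N) - Ψ xstar) + 32 * LΨ ^ 2 * ‖x N - xstar‖ ^ 2
        + ∑ k ∈ Icc 1 N, (k:ℝ) * ((k:ℝ) + 1) * ‖g (xmd k)‖ ^ 2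
      ≤ 32 * LΨ ^ 2 * ‖x 0 - xstar‖ ^ 2 := by
    intro N hN
    induction N, hN using Nat.le_induction with
    | base =>
      have h1 := step 1 le_rfl
      simp only [Nat.cast_one, Nat.sub_self] at h1 ⊢
      rw [Finset.Icc_self, Finset.sum_singleton]
      push_cast
      linarith
    | succ N hN ih =>
      have hs := step (N + 1) (by omega)
      have hpred : N + 1 - 1 = N := by omega
      rw [hpred] at hs
      rw [Finset.sum_Icc_succ_top (by omega : 1 ≤ N + 1)]
      push_cast at hs ⊢
      nlinarith [hs, ih]
  intro N hN
  have hkey := key N hN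
  have hNpos : (0:ℝ) < (N:ℝ) := by exact_mod_cast hN
  have hN1 : (0:ℝ) < (N:ℝ) + 1 := by linarith
  have hsumnn : 0 ≤ ∑ k ∈ Icc 1 N, (k:ℝ) * ((k:ℝ) + 1) * ‖g (xmd k)‖ ^ 2 := by
    apply Finset.sum_nonneg
    intro k hk
    have : (0:ℝ) ≤ (k:ℝ) := Nat.cast_nonneg k
    positivity
  have hDnn : 0 ≤ Ψ (xag N) - Ψ xstar := by linarith [hmin (xag N)]
  have hRnn : (0:ℝ) ≤ 32 * LΨ ^ 2 * ‖x N - xstar‖ ^ 2 := by positivity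
  constructor
  · rw [le_div_iff₀ (by positivity)]
    have h8 : 8 * (N:ℝ) * ((N:ℝ) + 1) * LΨ * (Ψ (xag N) - Ψ xstar)
        ≤ 32 * LΨ ^ 2 * ‖x 0 - xstar‖ ^ 2 := by linarith
    have h8L : (0:ℝ) < 8 * LΨ := by positivity
    refine le_of_mul_le_mul_left ?_ h8L
    calc 8 * LΨ * ((Ψ (xag N) - Ψ xstar) * ((N:ℝ) * ((N:ℝ) + 1)))
        = 8 * (N:ℝ) * ((N:ℝ) + 1) * LΨ * (Ψ (xag N) - Ψ xstar) := by ring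
      _ ≤ 32 * LΨ ^ 2 * ‖x 0 - xstar‖ ^ 2 := h8
      _ = 8 * LΨ * (4 * LΨ * ‖x 0 - xstar‖ ^ 2) := by ring
  · obtain ⟨k0, hk0mem, hk0min⟩ := Finset.exists_min_image (Icc 1 N)
      (fun k => ‖g (xmd k)‖ ^ 2) ⟨1, Finset.mem_Icc.mpr ⟨le_rfl, hN⟩⟩
    refine ⟨k0, hk0mem, ?_⟩
    set Q0 : ℝ := ‖g (xmd k0)‖ ^ 2 with hQ0def
    have hQ0nn : 0 ≤ Q0 := by positivity
    have hsum_lb : Q0 * ((N:ℝ) * ((N:ℝ) + 1) * ((N:ℝ) + 2) / 3)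
        ≤ ∑ k ∈ Icc 1 N, (k:ℝ) * ((k:ℝ) + 1) * ‖g (xmd k)‖ ^ 2 := by
      rw [← ag_sum_icc N, Finset.mul_sum]
      apply Finset.sum_le_sum
      intro k hk
      have hkn : (0:ℝ) ≤ (k:ℝ) := Nat.cast_nonneg k
      have := hk0min k hk
      calc Q0 * ((k:ℝ) * ((k:ℝ) + 1)) = (k:ℝ) * ((k:ℝ) + 1) * Q0 := by ring
        _ ≤ (k:ℝ) * ((k:ℝ) + 1) * ‖g (xmd k)‖ ^ 2 := by
            apply mul_le_mul_of_nonneg_left this (by positivity)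
    have hsum_ub : ∑ k ∈ Icc 1 N, (k:ℝ) * ((k:ℝ) + 1) * ‖g (xmd k)‖ ^ 2
        ≤ 32 * LΨ ^ 2 * ‖x 0 - xstar‖ ^ 2 := by
      have hDterm : (0:ℝ) ≤ 8 * (N:ℝ) * ((N:ℝ) + 1) * LΨ * (Ψ (xag N) - Ψ xstar) := by
        apply mul_nonneg _ hDnn
        positivity
      linarith
    rw [le_div_iff₀ (by positivity)]
    nlinarith [hsum_lb, hsum_ub, mul_nonneg hQ0nn (by positivity : (0:ℝ) ≤ 2*(N:ℝ)^2 + 2*(N:ℝ))]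
end
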